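/- Let M be a planar map with m edges, let α : V → ℕ, and let A be a cycle-free (acyclic) subset of the edges of M. Then the number of orientations of the edges of M in which every vertex v has out-degree exactly α(v) is at most 2^(m−|A|). -/

import Mathlib

/-- `D` is an orientation of the simple graph `G`, given as the set of directed
edges: for every edge `{a,b}` of `G` exactly one of `(a,b)`, `(b,a)` belongs to `D`,
and `D` contains only pairs corresponding to edges of `G`. -/
def IsOrient {V : Type*} (G : SimpleGraph V) (D : Finset (V × V)) : Prop :=
  (∀ p ∈ D, G.Adj p.1 p.2) ∧ ∀ a b : V, G.Adj a b → ((a, b) ∈ D ↔ (b, a) ∉ D)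

/-- The out-degree of `v` in the orientation `D`. -/
def outD {V : Type*} [DecidableEq V] (D : Finset (V × V)) (v : V) : ℕ :=
  (D.filter (fun p => p.1 = v)).card

open SimpleGraph in

lemma no_adj_of_acyclic {V : Type*} [Fintype V] (H : SimpleGraph V) (hac : H.IsAcyclic)
    (h2 : ∀ v w, H.Adj v w → ∃ u, H.Adj v u ∧ u ≠ w) : ∀ v w, ¬ H.Adj v w := by
  classical
  by_contra hcon
  push_neg at hcon
  obtain ⟨a, b, hab⟩ := hcon
  set S : Set ℕ := {n | ∃ (u v : V) (p : H.Walk u v), p.IsPath ∧ p.length = n} with hS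
  have h1S : 1 ∈ S := by
    refine ⟨a, b, Walk.cons hab Walk.nil, ?_, rfl⟩
    simp [Walk.cons_isPath_iff, hab.ne]
  have hbdd : BddAbove S := by
    refine ⟨Fintype.card V, fun n hn => ?_⟩
    obtain ⟨u, v, p, hp, hl⟩ := hn
    exact hl ▸ hp.length_lt.le
  obtain ⟨u, v, p, hp, hl⟩ := Nat.sSup_mem ⟨1, h1S⟩ hbdd
  have h1n : 1 ≤ sSup S := le_csSup hbdd h1S
  cases p with
  | nil => simp at hl; omega
  | @cons _ s _ h q =>
    rw [Walk.cons_isPath_iff] at hp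
    obtain ⟨t, hut, hts⟩ := h2 u s h
    by_cases ht : t ∈ (Walk.cons h q).support
    · -- build a cycle
      have hq' : ((Walk.cons h q).takeUntil t ht).IsPath :=
        (by rw [Walk.cons_isPath_iff]; exact hp : (Walk.cons h q).IsPath).takeUntil ht
      have hedge : s(u, t) ∉ ((Walk.cons h q).takeUntil t ht).reverse.edges := by
        rw [Walk.edges_reverse, List.mem_reverse]
        intro hmem
        have hmem' := Walk.edges_takeUntil_subset (Walk.cons h q) ht hmem
        rw [Walk.edges_cons] at hmem'
        rcases List.mem_cons.mp hmem' with hmem' | hmem'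
        · rw [Sym2.eq_iff] at hmem'
          rcases hmem' with ⟨_, h1⟩ | ⟨h1, _⟩
          · exact hts h1
          · exact h.ne h1
        · exact hp.2 (Walk.fst_mem_support_of_mem_edges q hmem')
      have hcyc : (Walk.cons hut ((Walk.cons h q).takeUntil t ht).reverse).IsCycle := by
        rw [Walk.cons_isCycle_iff]
        exact ⟨hq'.reverse, hedge⟩
      exact hac _ hcyc
    · -- extend the path
      have hlong : (Walk.cons hut.symm (Walk.cons h q)).IsPath := by
        rw [Walk.cons_isPath_iff]
        exact ⟨by rw [Walk.cons_isPath_iff]; exact hp, ht⟩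
      have : (Walk.cons hut.symm (Walk.cons h q)).length ∈ S :=
        ⟨t, v, _, hlong, rfl⟩
      have := le_csSup hbdd this
      simp only [Walk.length_cons] at this hl
      omega

open SimpleGraph in
lemma orient_ext {V : Type*} [Fintype V] [DecidableEq V]
    (G : SimpleGraph V) (A : Finset (Sym2 V))
    (hacyc : (SimpleGraph.fromEdgeSet (A : Set (Sym2 V))).IsAcyclic)
    (D1 D2 : Finset (V × V)) (h1 : IsOrient G D1) (h2 : IsOrient G D2)
    (hout : ∀ v, outD D1 v = outD D2 v)
    (hagree : ∀ a b : V, G.Adj a b → s(a, b) ∉ A → ((a, b) ∈ D1 ↔ (a, b) ∈ D2)) :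
    D1 = D2 := by
  classical
  -- the difference graph
  set H : SimpleGraph V :=
    { Adj := fun x y => G.Adj x y ∧
        (((x, y) ∈ D1 ∧ (x, y) ∉ D2) ∨ ((y, x) ∈ D1 ∧ (y, x) ∉ D2)),
      symm := ⟨by
        rintro x y ⟨hadj, hc | hc⟩
        · exact ⟨hadj.symm, Or.inr hc⟩
        · exact ⟨hadj.symm, Or.inl hc⟩⟩,
      loopless := ⟨fun x hx => hx.1.ne rfl⟩ } with hH
  have hle : H ≤ SimpleGraph.fromEdgeSet (A : Set (Sym2 V)) := by
    rintro x y ⟨hadj, hc⟩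
    refine ⟨?_, hadj.ne⟩
    by_contra hxA
    have hyA : s(y, x) ∉ (A : Set (Sym2 V)) := by rwa [Sym2.eq_swap]
    rcases hc with hc | hc
    · exact hc.2 ((hagree x y hadj hxA).mp hc.1)
    · exact hc.2 ((hagree y x hadj.symm hyA).mp hc.1)
  have hHac : H.IsAcyclic := fun v c hc => hacyc (c.mapLe hle) (hc.mapLe hle)
  -- the degree-two property
  have hdeg : ∀ v w, H.Adj v w → ∃ u, H.Adj v u ∧ u ≠ w := by
    rintro v w ⟨hadj, hc⟩
    have hcard : (D1.filter (fun p => p.1 = v)).card = (D2.filter (fun p => p.1 = v)).card :=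
      hout v
    have hsd : ((D1.filter (fun p => p.1 = v)) \ (D2.filter (fun p => p.1 = v))).card =
        ((D2.filter (fun p => p.1 = v)) \ (D1.filter (fun p => p.1 = v))).card :=
      Finset.card_sdiff_comm hcard
    rcases hc with hc | hc
    · -- (v,w) ∈ D1 \ D2 : find an out-edge of v in D2 \ D1
      have hne : ((D2.filter (fun p => p.1 = v)) \ (D1.filter (fun p => p.1 = v))).Nonempty := by
        rw [← Finset.card_pos, ← hsd, Finset.card_pos]
        exact ⟨(v, w), by simp [Finset.mem_sdiff, Finset.mem_filter, hc.1, hc.2]⟩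
      obtain ⟨p, hp⟩ := hne
      simp only [Finset.mem_sdiff, Finset.mem_filter] at hp
      obtain ⟨⟨hpD2, hpv⟩, hpn⟩ := hp
      set u := p.2 with hu
      have hpeq : p = (v, u) := by rw [hu, ← hpv]
      rw [hpeq] at hpD2 hpn
      have hvu : G.Adj v u := h2.1 _ hpD2
      have hnD1 : (v, u) ∉ D1 := fun hmem => hpn ⟨hmem, rfl⟩
      have huv1 : (u, v) ∈ D1 := by
        by_contra hnn
        exact hnD1 ((h1.2 v u hvu).mpr hnn)
      have huv2 : (u, v) ∉ D2 := (h2.2 v u hvu).mp hpD2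
      refine ⟨u, ⟨hvu, Or.inr ⟨huv1, huv2⟩⟩, fun heq => hc.2 (heq ▸ hpD2)⟩
    · -- (w,v) ∈ D1 \ D2 : so (v,w) ∈ D2 \ D1 ; find an out-edge of v in D1 \ D2
      have hvw1 : (v, w) ∉ D1 := (h1.2 w v hadj.symm).mp hc.1
      have hvw2 : (v, w) ∈ D2 := (h2.2 v w hadj).mpr hc.2
      have hne : ((D1.filter (fun p => p.1 = v)) \ (D2.filter (fun p => p.1 = v))).Nonempty := by
        rw [← Finset.card_pos, hsd, Finset.card_pos]
        exact ⟨(v, w), by simp [Finset.mem_sdiff, Finset.mem_filter, hvw1, hvw2]⟩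
      obtain ⟨p, hp⟩ := hne
      simp only [Finset.mem_sdiff, Finset.mem_filter] at hp
      obtain ⟨⟨hpD1, hpv⟩, hpn⟩ := hp
      set u := p.2 with hu
      have hpeq : p = (v, u) := by rw [hu, ← hpv]
      rw [hpeq] at hpD1 hpn
      have hnD2 : (v, u) ∉ D2 := fun hmem => hpn ⟨hmem, rfl⟩
      refine ⟨u, ⟨h1.1 _ hpD1, Or.inl ⟨hpD1, hnD2⟩⟩, fun heq => hvw1 (heq ▸ hpD1)⟩
  have hno := no_adj_of_acyclic H hHac hdeg
  apply Finset.ext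
  rintro ⟨x, y⟩
  constructor
  · intro hx
    have hadj : G.Adj x y := h1.1 _ hx
    by_contra hn
    exact hno x y ⟨hadj, Or.inl ⟨hx, hn⟩⟩
  · intro hx
    have hadj : G.Adj x y := h2.1 _ hx
    by_contra hn
    have hyx1 : (y, x) ∈ D1 := by
      by_contra hnn
      exact hn ((h1.2 x y hadj).mpr hnn)
    have hyx2 : (y, x) ∉ D2 := (h2.2 x y hadj).mp hx
    exact hno x y ⟨hadj, Or.inr ⟨hyx1, hyx2⟩⟩

/-- If `A` is a cycle-free subset of the edges of a graph `M` with `m` edges, then the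
number of `α`-orientations of `M` is at most `2 ^ (m - |A|)`. -/
theorem alpha_orientations_le_of_acyclic_subset
    {V : Type*} [Fintype V] [DecidableEq V]
    (G : SimpleGraph V) [DecidableRel G.Adj] (α : V → ℕ)
    (A : Finset (Sym2 V)) (hA : A ⊆ G.edgeFinset)
    (hacyc : (SimpleGraph.fromEdgeSet (A : Set (Sym2 V))).IsAcyclic) :
    {D : Finset (V × V) | IsOrient G D ∧ ∀ v, outD D v = α v}.ncard ≤
      2 ^ (G.edgeFinset.card - A.card) := by
  classical
  set B := G.edgeFinset \ A with hB
  set f : Finset (V × V) → ({e : Sym2 V // e ∈ B} → Prop) :=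
    fun D e => Quot.out e.1 ∈ D with hf
  have hinj : Set.InjOn f {D : Finset (V × V) | IsOrient G D ∧ ∀ v, outD D v = α v} := by
    rintro D1 ⟨h1, hd1⟩ D2 ⟨h2, hd2⟩ hfeq
    refine orient_ext G A hacyc D1 D2 h1 h2 (fun v => (hd1 v).trans (hd2 v).symm) ?_
    intro a b hadj hnA
    have heB : s(a, b) ∈ B :=
      Finset.mem_sdiff.mpr ⟨SimpleGraph.mem_edgeFinset.mpr (G.mem_edgeSet.mpr hadj), hnA⟩
    have hcong : (Quot.out (s(a, b) : Sym2 V) ∈ D1) = (Quot.out (s(a, b) : Sym2 V) ∈ D2) :=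
      congrFun hfeq ⟨s(a, b), heB⟩
    set q : V × V := Quot.out (s(a, b) : Sym2 V) with hq
    have hqq : s(q.1, q.2) = s(a, b) := by
      rw [hq]
      exact Quot.out_eq _
    rw [Sym2.eq_iff] at hqq
    rcases hqq with ⟨hh1, hh2⟩ | ⟨hh1, hh2⟩
    · have hq2 : q = (a, b) := Prod.ext hh1 hh2
      rw [hq2] at hcong
      exact iff_of_eq hcong
    · have hq2 : q = (b, a) := Prod.ext hh1 hh2
      rw [hq2] at hcong
      rw [h1.2 a b hadj, h2.2 a b hadj, hcong]
  have hmaps : Set.MapsTo f {D : Finset (V × V) | IsOrient G D ∧ ∀ v, outD D v = α v}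
      (Set.univ : Set ({e : Sym2 V // e ∈ B} → Prop)) := fun _ _ => Set.mem_univ _
  have hle := Set.ncard_le_ncard_of_injOn f hmaps hinj (Set.finite_univ)
  rw [Set.ncard_univ, Nat.card_eq_fintype_card, Fintype.card_fun, Fintype.card_prop,
    Fintype.card_coe, hB, Finset.card_sdiff_of_subset hA] at hle
  exact hle
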